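/- arXiv:quant-ph/0502173 — 2 statements merged into one kernel-verified Lean document; each statement's English description precedes it below -/
import Mathlib

section
/- (Schur's theorem) If K is a real orthogonal n×n matrix and D_λ is the diagonal matrix with diagonal entries λ = (λ₁,...,λₙ), then the vector of diagonal entries of Kᵀ D_λ K is majorized by λ. -/
open scoped BigOperators
open Matrix

/-- The decreasing rearrangement of a vector in `ℝ^k`. -/
noncomputable def descSort {k : ℕ} (x : Fin k → ℝ) : Fin k → ℝ :=
  fun i => (x ∘ Tuple.sort x) i.rev

/-- Sum of the `m` largest entries of `x`, i.e. partial sum of the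
decreasing rearrangement. -/
noncomputable def partSum {k : ℕ} (x : Fin k → ℝ) (m : ℕ) : ℝ :=
  ∑ i : Fin k, if (i : ℕ) < m then descSort x i else 0

/-- `Majorized x y` means `x ≺ y`. -/
noncomputable def Majorized {k : ℕ} (x y : Fin k → ℝ) : Prop :=
  (∀ m : ℕ, m < k → partSum x m ≤ partSum y m) ∧ (∑ i, x i = ∑ i, y i)

open Finset

lemma card_filter_lt' {k m : ℕ} (h : m ≤ k) :
    (Finset.univ.filter (fun i : Fin k => (i : ℕ) < m)).card = m := by
  have : (Finset.univ.filter (fun i : Fin k => (i : ℕ) < m)) =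
      Finset.map (Fin.castLEEmb h) Finset.univ := by
    ext j
    simp [Fin.castLEEmb, Fin.ext_iff]
    constructor
    · intro hj; exact ⟨⟨j, hj⟩, rfl⟩
    · rintro ⟨i, hi⟩; omega
  rw [this, card_map, card_univ, Fintype.card_fin]

/-- The top-`m` index set of `x`. -/
noncomputable def topSet {k : ℕ} (x : Fin k → ℝ) (m : ℕ) : Finset (Fin k) :=
  (Finset.univ.filter (fun i : Fin k => (i : ℕ) < m)).image
    (fun i => Tuple.sort x (Fin.rev i))

lemma topSet_injOn {k : ℕ} (x : Fin k → ℝ) :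
    Function.Injective (fun i : Fin k => Tuple.sort x (Fin.rev i)) := by
  intro a b hab
  have := (Tuple.sort x).injective hab
  exact Fin.rev_injective this

lemma card_topSet {k m : ℕ} (x : Fin k → ℝ) (h : m ≤ k) :
    (topSet x m).card = m := by
  rw [topSet, Finset.card_image_of_injective _ (topSet_injOn x), card_filter_lt' h]

lemma partSum_eq_sum_topSet {k m : ℕ} (x : Fin k → ℝ) :
    partSum x m = ∑ j ∈ topSet x m, x j := by
  rw [partSum, ← Finset.sum_filter, topSet,
    Finset.sum_image (fun a _ b _ h => topSet_injOn x h)]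
  rfl

/-- Key lemma: a `[0,1]`-weighted combination with total weight `m` is at most
the sum of the `m` largest entries. -/
lemma sum_mul_le_partSum {k : ℕ} (lam c : Fin k → ℝ) (m : ℕ)
    (hm : m ≤ k) (h0 : ∀ j, 0 ≤ c j) (h1 : ∀ j, c j ≤ 1)
    (hs : ∑ j, c j = m) :
    ∑ j, c j * lam j ≤ partSum lam m := by
  rcases Nat.eq_zero_or_pos m with rfl | hm1
  · have hc : ∀ j ∈ Finset.univ, c j = 0 := by
      intro j _
      have := (Finset.sum_eq_zero_iff_of_nonneg (fun j _ => h0 j)).1 (by simpa using hs)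
      simpa using this j (Finset.mem_univ j)
    have : ∑ j, c j * lam j = 0 :=
      Finset.sum_eq_zero fun j hj => by rw [hc j hj, zero_mul]
    rw [this, partSum]
    simp
  · -- threshold
    have hk : 0 < k := lt_of_lt_of_le hm1 hm
    have hm1k : m - 1 < k := by omega
    set σ := Tuple.sort lam with hσ
    set t : ℝ := descSort lam ⟨m - 1, hm1k⟩ with ht
    set B := topSet lam m with hB
    have hmono := Tuple.monotone_sort lam
    -- membership characterization: j ∈ B ↔ m ≤ (σ⁻¹ j).val + ... 
    have hBmem : ∀ j, j ∈ B ↔ ((σ.symm j : Fin k) : ℕ).succ + m > k := by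
      intro j
      constructor
      · rintro hj
        rw [hB, topSet, Finset.mem_image] at hj
        obtain ⟨i, hi, hij⟩ := hj
        simp at hi
        have : σ.symm j = Fin.rev i := by
          rw [← hij]; exact σ.symm_apply_apply _
        rw [this]
        simp [Fin.rev]
        omega
      · intro hj
        rw [hB, topSet, Finset.mem_image]
        refine ⟨Fin.rev (σ.symm j), ?_, by simp only [Fin.rev_rev]; exact σ.apply_symm_apply j⟩
        simp [Fin.rev]
        omega
    -- bounds
    have htlow : ∀ j ∈ B, t ≤ lam j := by
      intro j hj
      have h1 := (hBmem j).1 hj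
      have : (⟨m-1, hm1k⟩ : Fin k).rev ≤ σ.symm j := by
        simp [Fin.le_def, Fin.rev]; omega
      have := hmono this
      simpa [ht, descSort, hσ] using this
    have hthigh : ∀ j ∉ B, lam j ≤ t := by
      intro j hj
      have h1 : ¬ (((σ.symm j : Fin k) : ℕ).succ + m > k) := fun h => hj ((hBmem j).2 h)
      have : σ.symm j ≤ (⟨m-1, hm1k⟩ : Fin k).rev := by
        simp [Fin.le_def, Fin.rev]; omega
      have := hmono this
      simpa [ht, descSort, hσ] using this
    -- indicator
    set b : Fin k → ℝ := fun j => if j ∈ B then 1 else 0 with hb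
    have hbsum : ∑ j, b j = m := by
      rw [hb]
      rw [Finset.sum_ite_mem]
      simp [Finset.univ_inter, card_topSet lam hm, hB]
    have key : ∑ j, (c j - b j) * (lam j - t) ≤ 0 := by
      apply Finset.sum_nonpos
      intro j _
      by_cases hj : j ∈ B
      · have : c j - b j ≤ 0 := by simp [hb, hj]; linarith [h1 j]
        have : 0 ≤ lam j - t := by linarith [htlow j hj]
        nlinarith [h1 j, htlow j hj]
      · have : 0 ≤ c j - b j := by simp [hb, hj]; exact h0 j
        nlinarith [h0 j, hthigh j hj]
    have expand : ∑ j, (c j - b j) * (lam j - t)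
        = ∑ j, c j * lam j - ∑ j, b j * lam j - t * (∑ j, c j - ∑ j, b j) := by
      simp only [mul_sub, Finset.mul_sum, ← Finset.sum_sub_distrib]
      exact Finset.sum_congr rfl fun j _ => by ring
    have hbl : ∑ j, b j * lam j = ∑ j ∈ B, lam j := by
      rw [hb]
      rw [Finset.sum_congr rfl (fun j _ => by rw [ite_mul, one_mul, zero_mul])]
      rw [Finset.sum_ite_mem, Finset.univ_inter]
    rw [partSum_eq_sum_topSet, ← hB, ← hbl]
    have := expand ▸ key
    rw [hs, hbsum] at this
    linarith

/-- **Schur's theorem.** The diagonal of `Kᵀ D_λ K`, for `K` orthogonal,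
is majorized by `λ`. -/
theorem schur_diagonal_majorized {n : ℕ} (K : Matrix (Fin n) (Fin n) ℝ)
    (hK : Kᵀ * K = 1) (lam : Fin n → ℝ) :
    Majorized (fun i => (Kᵀ * Matrix.diagonal lam * K) i i) lam := by
  have hK' : K * Kᵀ = 1 := mul_eq_one_comm.mp hK
  set d : Fin n → ℝ := fun i => (Kᵀ * Matrix.diagonal lam * K) i i with hd
  have hdi : ∀ i, d i = ∑ j, lam j * (K j i * K j i) := by
    intro i
    rw [hd]
    simp [Matrix.mul_apply, Matrix.diagonal_apply, Finset.sum_ite_eq, Matrix.transpose_apply,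
      Finset.sum_mul]
    exact Finset.sum_congr rfl fun j _ => by ring
  have hcol : ∀ i, ∑ j, K j i * K j i = 1 := by
    intro i
    have := congrFun (congrFun hK i) i
    simpa [Matrix.mul_apply, Matrix.one_apply, Matrix.transpose_apply] using this
  have hrow : ∀ j, ∑ i, K j i * K j i = 1 := by
    intro j
    have := congrFun (congrFun hK' j) j
    simpa [Matrix.mul_apply, Matrix.one_apply, Matrix.transpose_apply] using this
  constructor
  · intro m hmn
    have hm : m ≤ n := le_of_lt hmn
    set A := topSet d m with hA
    have hcard : A.card = m := card_topSet d hm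
    set c : Fin n → ℝ := fun j => ∑ i ∈ A, K j i * K j i with hc
    have h0 : ∀ j, 0 ≤ c j := fun j => Finset.sum_nonneg fun i _ => mul_self_nonneg _
    have h1 : ∀ j, c j ≤ 1 := by
      intro j
      rw [← hrow j, hc]
      exact Finset.sum_le_sum_of_subset_of_nonneg (Finset.subset_univ A)
        (fun i _ _ => mul_self_nonneg _)
    have hcs : ∑ j, c j = m := by
      rw [hc, Finset.sum_comm]
      rw [Finset.sum_congr rfl fun i _ => hcol i]
      simp [hcard]
    have hps : partSum d m = ∑ j, c j * lam j := by
      rw [partSum_eq_sum_topSet, ← hA]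
      rw [Finset.sum_congr rfl fun i _ => hdi i]
      rw [Finset.sum_comm]
      apply Finset.sum_congr rfl
      intro j _
      simp only [hc]
      rw [Finset.sum_mul]
      exact Finset.sum_congr rfl fun i _ => by ring
    rw [hps]
    exact sum_mul_le_partSum lam c m hm h0 h1 hcs
  · rw [Finset.sum_congr rfl fun i _ => hdi i, Finset.sum_comm]
    apply Finset.sum_congr rfl
    intro j _
    rw [← Finset.mul_sum, hrow j, mul_one]
end

section
/- (Horn's theorem) If a, λ ∈ R^n and a ≺ λ, then there exists a real orthogonal matrix K ∈ SO(n) such that the diagonal entries of Kᵀ D_λ K equal (a₁,...,aₙ), where D_λ is the diagonal matrix with entries λ. -/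
open scoped BigOperators
open Matrix

/-! ### permutation matrices -/

def permMat {k : ℕ} (σ : Equiv.Perm (Fin k)) : Matrix (Fin k) (Fin k) ℝ :=
  Matrix.of fun i j => if σ j = i then 1 else 0

lemma permMat_mulL {k : ℕ} (σ : Equiv.Perm (Fin k)) (N : Matrix (Fin k) (Fin k) ℝ)
    (x y : Fin k) : ((permMat σ)ᵀ * N) x y = N (σ x) y := by
  rw [Matrix.mul_apply]
  simp [permMat, Matrix.transpose_apply, ite_mul]

lemma permMat_mulR {k : ℕ} (σ : Equiv.Perm (Fin k)) (N : Matrix (Fin k) (Fin k) ℝ)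
    (x y : Fin k) : (N * permMat σ) x y = N x (σ y) := by
  rw [Matrix.mul_apply]
  simp [permMat, mul_ite]

lemma permMat_orth {k : ℕ} (σ : Equiv.Perm (Fin k)) : (permMat σ)ᵀ * permMat σ = 1 := by
  ext x y
  rw [permMat_mulL]
  simp [permMat, Matrix.one_apply, Equiv.apply_eq_iff_eq, eq_comm]

lemma permMat_orth' {k : ℕ} (σ : Equiv.Perm (Fin k)) : permMat σ * (permMat σ)ᵀ = 1 := by
  exact mul_eq_one_comm.mp (permMat_orth σ)

lemma permMat_conj {k : ℕ} (σ : Equiv.Perm (Fin k)) (N : Matrix (Fin k) (Fin k) ℝ)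
    (x y : Fin k) : ((permMat σ)ᵀ * N * permMat σ) x y = N (σ x) (σ y) := by
  rw [permMat_mulR, permMat_mulL]

lemma permMat_diag {k : ℕ} (σ : Equiv.Perm (Fin k)) (d : Fin k → ℝ) :
    (permMat σ)ᵀ * Matrix.diagonal d * permMat σ = Matrix.diagonal (d ∘ σ) := by
  ext x y
  rw [permMat_conj]
  by_cases h : x = y
  · subst h; simp [Matrix.diagonal_apply_eq]
  · rw [Matrix.diagonal_apply_ne _ (fun hc => h (σ.injective hc)),
      Matrix.diagonal_apply_ne _ h]

/-! ### descSort lemmas -/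

lemma descSort_antitone {k : ℕ} (x : Fin k → ℝ) : Antitone (descSort x) := by
  intro i j hij
  exact Tuple.monotone_sort x (by simpa [Fin.rev_le_rev] using hij)

lemma descSort_comp_perm {k : ℕ} (x : Fin k → ℝ) (σ : Equiv.Perm (Fin k)) :
    descSort (x ∘ σ) = descSort x := by
  funext i
  simp only [descSort]
  rw [Tuple.comp_perm_comp_sort_eq_comp_sort]

lemma exists_perm_descSort {k : ℕ} (x : Fin k → ℝ) :
    ∃ σ : Equiv.Perm (Fin k), x = descSort x ∘ σ := by
  refine ⟨((Tuple.sort x)⁻¹ : Equiv.Perm (Fin k)).trans (Fin.revPerm), ?_⟩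
  funext i
  simp [descSort, Fin.rev_rev]

lemma partSum_comp_perm {k : ℕ} (x : Fin k → ℝ) (σ : Equiv.Perm (Fin k)) (m : ℕ) :
    partSum (x ∘ σ) m = partSum x m := by
  simp [partSum, descSort_comp_perm]

lemma descSort_eq_self {k : ℕ} {x : Fin k → ℝ} (hx : Antitone x) : descSort x = x := by
  have h : x ∘ (Fin.revPerm : Equiv.Perm (Fin k)) = x ∘ Tuple.sort x := by
    rw [Tuple.comp_sort_eq_comp_iff_monotone]
    intro i j hij
    exact hx (by simpa [Fin.rev_le_rev] using hij)
  funext i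
  have := congrFun h i.rev
  simp only [Function.comp_apply] at this
  simp only [descSort, Function.comp_apply, ← this]
  simp [Fin.rev_rev]

/-! ### plain partial sums -/

noncomputable def PS {k : ℕ} (x : Fin k → ℝ) (m : ℕ) : ℝ :=
  ∑ i : Fin k, if (i : ℕ) < m then x i else 0

lemma partSum_eq_PS {k : ℕ} (x : Fin k → ℝ) (m : ℕ) : partSum x m = PS (descSort x) m := rfl

lemma PS_zero {k : ℕ} (x : Fin k → ℝ) : PS x 0 = 0 := by simp [PS]

lemma PS_succ {k : ℕ} (x : Fin k → ℝ) (m : ℕ) :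
    PS x (m + 1) = PS x m + (if h : m < k then x ⟨m, h⟩ else 0) := by
  have key : ∀ i : Fin k, (if (i : ℕ) < m + 1 then x i else 0) =
      (if (i : ℕ) < m then x i else 0) + (if (i : ℕ) = m then x i else 0) := by
    intro i
    rcases lt_trichotomy (i : ℕ) m with h | h | h
    · simp [h, Nat.lt_succ_of_lt h, h.ne]
    · simp [h]
    · have h1 : ¬ ((i : ℕ) < m + 1) := by omega
      have h2 : ¬ ((i : ℕ) < m) := by omega
      simp [h1, h2, h.ne']
  unfold PS
  rw [Finset.sum_congr rfl (fun i _ => key i), Finset.sum_add_distrib]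
  congr 1
  by_cases h : m < k
  · rw [Finset.sum_eq_single_of_mem ⟨m, h⟩ (Finset.mem_univ _)]
    · simp [h]
    · intro i _ hi
      have : (i : ℕ) ≠ m := fun hc => hi (Fin.ext hc)
      simp [this]
  · rw [Finset.sum_eq_zero, dif_neg h]
    intro i _
    have : (i : ℕ) ≠ m := by have := i.isLt; omega
    simp [this]

lemma PS_of_le {k : ℕ} (x : Fin k → ℝ) {m : ℕ} (h : k ≤ m) : PS x m = ∑ i, x i := by
  unfold PS
  exact Finset.sum_congr rfl fun i _ => by simp [lt_of_lt_of_le i.isLt h]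

lemma filt_eq_map {k m : ℕ} (hm : m ≤ k) :
    Finset.univ.filter (fun i : Fin k => (i : ℕ) < m) =
      Finset.univ.map ⟨Fin.castLE hm, Fin.castLE_injective hm⟩ := by
  ext u
  simp only [Finset.mem_filter, Finset.mem_univ, true_and, Finset.mem_map,
    Function.Embedding.coeFn_mk]
  constructor
  · intro hu
    exact ⟨⟨u.1, hu⟩, rfl⟩
  · rintro ⟨i, rfl⟩
    exact i.isLt

lemma PS_eq_sum_fin {k : ℕ} (x : Fin k → ℝ) {m : ℕ} (hm : m ≤ k) :
    PS x m = ∑ i : Fin m, x (Fin.castLE hm i) := by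
  unfold PS
  rw [← Finset.sum_filter, filt_eq_map hm, Finset.sum_map]
  rfl

lemma PS_agree {k1 k2 : ℕ} (x : Fin k1 → ℝ) (y : Fin k2 → ℝ) {m : ℕ}
    (hm1 : m ≤ k1) (hm2 : m ≤ k2)
    (h : ∀ i : Fin m, x (Fin.castLE hm1 i) = y (Fin.castLE hm2 i)) : PS x m = PS y m := by
  rw [PS_eq_sum_fin x hm1, PS_eq_sum_fin y hm2]
  exact Finset.sum_congr rfl fun i _ => h i

lemma sum_le_PS_of_antitone {k : ℕ} {d : Fin k → ℝ} (hd : Antitone d) :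
    ∀ (m : ℕ) (T : Finset (Fin k)), T.card = m → ∑ i ∈ T, d i ≤ PS d m := by
  intro m
  induction m with
  | zero => intro T hT; rw [Finset.card_eq_zero] at hT; simp [hT, PS_zero]
  | succ m ih =>
    intro T hT
    have hne : T.Nonempty := Finset.card_pos.mp (by omega)
    set u := T.max' hne with hu
    have humem : u ∈ T := T.max'_mem hne
    have hcard : (T.erase u).card = m := by rw [Finset.card_erase_of_mem humem, hT]; rfl
    have hmk : m < k := by
      have := Finset.card_le_univ T
      simp [hT, Fintype.card_fin] at this
      omega
    have hum : m ≤ (u : ℕ) := by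
      have hsub : T ⊆ Finset.univ.filter (fun v : Fin k => (v : ℕ) < (u : ℕ) + 1) := by
        intro v hv
        simp only [Finset.mem_filter, Finset.mem_univ, true_and]
        have := T.le_max' v hv
        omega
      have hcle : T.card ≤ (u : ℕ) + 1 := by
        have h2 := Finset.card_le_card hsub
        rwa [filt_eq_map (by omega : (u : ℕ) + 1 ≤ k), Finset.card_map, Finset.card_univ,
          Fintype.card_fin] at h2
      omega
    have hdu : d u ≤ d ⟨m, hmk⟩ := hd (by simp [Fin.le_def]; omega)
    calc ∑ i ∈ T, d i = d u + ∑ i ∈ T.erase u, d i := (Finset.add_sum_erase T d humem).symm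
    _ ≤ d ⟨m, hmk⟩ + PS d m := add_le_add hdu (ih _ hcard)
    _ = PS d (m + 1) := by rw [PS_succ, dif_pos hmk, add_comm]

lemma PS_le_partSum {k : ℕ} (x : Fin k → ℝ) (m : ℕ) : PS x m ≤ partSum x m := by
  obtain ⟨σ, hσ⟩ := exists_perm_descSort x
  rw [partSum_eq_PS]
  set d := descSort x with hd
  by_cases hm : m ≤ k
  · have h1 : PS x m = ∑ u ∈ (Finset.univ.filter (fun i : Fin k => (i : ℕ) < m)).image σ, d u := by
      rw [Finset.sum_image (fun a _ b _ h => σ.injective h)]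
      unfold PS
      rw [← Finset.sum_filter]
      exact Finset.sum_congr rfl fun i _ => by rw [hσ]; rfl
    rw [h1]
    apply sum_le_PS_of_antitone (descSort_antitone x) m
    rw [Finset.card_image_of_injective _ σ.injective, filt_eq_map hm, Finset.card_map,
      Finset.card_univ, Fintype.card_fin]
  · push_neg at hm
    have : PS x m = PS d m := by
      rw [PS_of_le x hm.le, PS_of_le d hm.le]
      rw [hσ]
      exact Equiv.sum_comp σ d
    exact this.le

lemma partSum_of_antitone {k : ℕ} {x : Fin k → ℝ} (hx : Antitone x) (m : ℕ) :
    partSum x m = PS x m := by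
  rw [partSum_eq_PS, descSort_eq_self hx]

/-! ### plane rotations -/

noncomputable def rotMat {k : ℕ} (u v : Fin k) (c s : ℝ) : Matrix (Fin k) (Fin k) ℝ :=
  Matrix.of fun i x =>
    if i = u then (if x = u then c else if x = v then -s else 0)
    else if i = v then (if x = u then s else if x = v then c else 0)
    else if i = x then 1 else 0

section rot

variable {k : ℕ} {u v : Fin k} {c s : ℝ}

lemma rotMat_apply_u (x : Fin k) :
    rotMat u v c s u x = if x = u then c else if x = v then -s else 0 := by simp [rotMat]

lemma rotMat_apply_v (huv : u ≠ v) (x : Fin k) :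
    rotMat u v c s v x = if x = u then s else if x = v then c else 0 := by
  simp [rotMat, huv.symm]

lemma rotMat_apply_other {i : Fin k} (h1 : i ≠ u) (h2 : i ≠ v) (x : Fin k) :
    rotMat u v c s i x = if i = x then 1 else 0 := by simp [rotMat, h1, h2]

lemma rot_split (huv : u ≠ v) (f : Fin k → ℝ) :
    ∑ i, f i = f u + f v + ∑ i ∈ Finset.univ \ {u, v}, f i := by
  have hsd := Finset.sum_sdiff (f := f) (Finset.subset_univ ({u, v} : Finset (Fin k)))
  rw [← hsd, Finset.sum_pair huv]
  ring

lemma rot_rest (huv : u ≠ v) (x y : Fin k) :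
    ∑ i ∈ Finset.univ \ {u, v}, rotMat u v c s i x * rotMat u v c s i y
      = if x = y ∧ x ≠ u ∧ x ≠ v then 1 else 0 := by
  by_cases hx : x = u ∨ x = v
  · rw [Finset.sum_eq_zero, if_neg (by tauto)]
    intro i hi
    simp only [Finset.mem_sdiff, Finset.mem_insert, Finset.mem_singleton, not_or] at hi
    have hix : i ≠ x := by rcases hx with h | h <;> (subst h; tauto)
    rw [rotMat_apply_other hi.2.1 hi.2.2, if_neg hix, zero_mul]
  · push_neg at hx
    rw [Finset.sum_eq_single_of_mem x (by simp [hx.1, hx.2])]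
    · rw [rotMat_apply_other hx.1 hx.2, rotMat_apply_other hx.1 hx.2, if_pos rfl, one_mul]
      simp [hx.1, hx.2]
    · intro i hi hix
      simp only [Finset.mem_sdiff, Finset.mem_insert, Finset.mem_singleton, not_or] at hi
      rw [rotMat_apply_other hi.2.1 hi.2.2, if_neg hix, zero_mul]

lemma rotMat_orth (huv : u ≠ v) (hcs : c ^ 2 + s ^ 2 = 1) :
    (rotMat u v c s)ᵀ * rotMat u v c s = 1 := by
  ext x y
  rw [Matrix.mul_apply]
  simp only [Matrix.transpose_apply]
  rw [rot_split huv, rot_rest huv, rotMat_apply_u, rotMat_apply_u,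
    rotMat_apply_v huv, rotMat_apply_v huv]
  by_cases hxu : x = u <;> by_cases hxv : x = v <;>
    by_cases hyu : y = u <;> by_cases hyv : y = v <;>
    simp_all [Matrix.one_apply, huv, huv.symm, Ne.symm] <;>
    nlinarith [hcs]

/-- entries of the conjugated diagonal matrix -/
lemma rot_conj_apply (huv : u ≠ v) (d : Fin k → ℝ) (x y : Fin k) :
    ((rotMat u v c s)ᵀ * Matrix.diagonal d * rotMat u v c s) x y
      = rotMat u v c s u x * (d u * rotMat u v c s u y)
        + rotMat u v c s v x * (d v * rotMat u v c s v y)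
        + (if x = y ∧ x ≠ u ∧ x ≠ v then d x else 0) := by
  rw [Matrix.mul_assoc, Matrix.mul_apply]
  simp only [Matrix.transpose_apply, Matrix.diagonal_mul]
  rw [rot_split huv (f := fun i => rotMat u v c s i x * (d i * rotMat u v c s i y))]
  congr 1
  by_cases hx : x = u ∨ x = v
  · rw [Finset.sum_eq_zero, if_neg (by tauto)]
    intro i hi
    simp only [Finset.mem_sdiff, Finset.mem_insert, Finset.mem_singleton, not_or] at hi
    have hix : i ≠ x := by rcases hx with h | h <;> (subst h; tauto)
    rw [rotMat_apply_other hi.2.1 hi.2.2, if_neg hix, zero_mul]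
  · push_neg at hx
    rw [Finset.sum_eq_single_of_mem x (by simp [hx.1, hx.2])]
    · rw [rotMat_apply_other hx.1 hx.2, rotMat_apply_other hx.1 hx.2, if_pos rfl, one_mul]
      by_cases hxy : x = y
      · subst hxy; simp [hx.1, hx.2]
      · simp [hxy]
    · intro i hi hix
      simp only [Finset.mem_sdiff, Finset.mem_insert, Finset.mem_singleton, not_or] at hi
      rw [rotMat_apply_other hi.2.1 hi.2.2, if_neg hix, zero_mul]

end rot

/-- existence of a rotation angle splitting `p, q` into `t, p + q - t`. -/
lemma exists_cs {p q t : ℝ} (hq : q ≤ t) (hp : t ≤ p) :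
    ∃ c s : ℝ, c ^ 2 + s ^ 2 = 1 ∧ c ^ 2 * p + s ^ 2 * q = t := by
  rcases eq_or_lt_of_le (hq.trans hp) with heq | hlt
  · exact ⟨1, 0, by norm_num, by nlinarith⟩
  · refine ⟨Real.sqrt ((t - q) / (p - q)), Real.sqrt ((p - t) / (p - q)), ?_, ?_⟩
    · rw [Real.sq_sqrt (div_nonneg (by linarith) (by linarith)),
        Real.sq_sqrt (div_nonneg (by linarith) (by linarith)), ← add_div,
        show t - q + (p - t) = p - q by ring, div_self (by linarith)]
    · rw [Real.sq_sqrt (div_nonneg (by linarith) (by linarith)),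
        Real.sq_sqrt (div_nonneg (by linarith) (by linarith)),
        div_mul_eq_mul_div, div_mul_eq_mul_div, ← add_div,
        div_eq_iff (by linarith : p - q ≠ 0)]
      ring

/-! ### small matrix helpers -/

lemma mul_cancel_left_one {k : ℕ} {P Q : Matrix (Fin k) (Fin k) ℝ} (h : P * Q = 1)
    (X : Matrix (Fin k) (Fin k) ℝ) : P * (Q * X) = X := by
  rw [← Matrix.mul_assoc, h, Matrix.one_mul]

lemma orth_mul {k : ℕ} {A B : Matrix (Fin k) (Fin k) ℝ} (hA : Aᵀ * A = 1) (hB : Bᵀ * B = 1) :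
    (A * B)ᵀ * (A * B) = 1 := by
  rw [Matrix.transpose_mul, Matrix.mul_assoc, mul_cancel_left_one hA, hB]

lemma PS_tail {k : ℕ} (x : Fin (k + 1) → ℝ) (m : ℕ) :
    PS (fun i : Fin k => x i.succ) m = PS x (m + 1) - x 0 := by
  induction m with
  | zero => rw [PS_zero, PS_succ, PS_zero, dif_pos (Nat.succ_pos k)]; simp
  | succ m ihm =>
    rw [PS_succ, PS_succ, ihm]
    by_cases h : m < k
    · rw [dif_pos h, dif_pos (by omega : m + 1 < k + 1)]
      have : x (Fin.succ ⟨m, h⟩) = x ⟨m + 1, by omega⟩ := rfl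
      rw [this]; ring
    · rw [dif_neg h, dif_neg (by omega : ¬ m + 1 < k + 1)]; ring

noncomputable def reduceLam {n : ℕ} (L : Fin (n+2) → ℝ) (j : Fin (n+1)) (t : ℝ) :
    Fin (n+1) → ℝ :=
  fun x => if x = j then L j.castSucc + L j.succ - t else L (j.castSucc.succAbove x)

lemma reduceLam_j {n : ℕ} (L : Fin (n+2) → ℝ) (j : Fin (n+1)) (t : ℝ) :
    reduceLam L j t j = L j.castSucc + L j.succ - t := if_pos rfl

lemma reduceLam_ne {n : ℕ} (L : Fin (n+2) → ℝ) {j x : Fin (n+1)} (t : ℝ) (hx : x ≠ j) :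
    reduceLam L j t x = L (j.castSucc.succAbove x) := if_neg hx

/-! ### the main induction -/

theorem horn_aux : ∀ (k : ℕ) (a lam : Fin k → ℝ), Antitone a → Majorized a lam →
    ∃ K : Matrix (Fin k) (Fin k) ℝ, Kᵀ * K = 1 ∧
      ∀ i, (Kᵀ * Matrix.diagonal lam * K) i i = a i := by
  intro k
  induction k with
  | zero => intro a lam _ _; exact ⟨1, by simp, fun i => i.elim0⟩
  | succ n ih =>
    intro a lam ha hmaj
    obtain ⟨τ, hτ⟩ := exists_perm_descSort lam
    set L := descSort lam with hLdef
    have hLanti : Antitone L := descSort_antitone lam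
    -- transfer from sorted L back to lam
    suffices hKL : ∃ K : Matrix (Fin (n+1)) (Fin (n+1)) ℝ, Kᵀ * K = 1 ∧
        ∀ i, (Kᵀ * Matrix.diagonal L * K) i i = a i by
      obtain ⟨K, h1, h2⟩ := hKL
      refine ⟨(permMat τ)ᵀ * K, ?_, ?_⟩
      · rw [show ((permMat τ)ᵀ * K)ᵀ * ((permMat τ)ᵀ * K)
            = Kᵀ * (permMat τ * ((permMat τ)ᵀ * K)) by
          rw [Matrix.transpose_mul, Matrix.transpose_transpose, Matrix.mul_assoc]]
        rw [mul_cancel_left_one (permMat_orth' τ), h1]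
      · intro i
        have hdg : Matrix.diagonal lam = (permMat τ)ᵀ * Matrix.diagonal L * permMat τ := by
          rw [permMat_diag, ← hτ]
        rw [hdg, show ((permMat τ)ᵀ * K)ᵀ * ((permMat τ)ᵀ * Matrix.diagonal L * permMat τ)
            * ((permMat τ)ᵀ * K) = Kᵀ * Matrix.diagonal L * K from ?_]
        · exact h2 i
        · simp only [Matrix.transpose_mul, Matrix.transpose_transpose, Matrix.mul_assoc]
          rw [mul_cancel_left_one (permMat_orth' τ), mul_cancel_left_one (permMat_orth' τ)]
    -- majorization wrt L
    have hmajL : Majorized a L := by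
      constructor
      · intro m hm
        have h0 := hmaj.1 m hm
        rwa [show partSum lam m = partSum L m from by rw [hτ, partSum_comp_perm]] at h0
      · have h0 := hmaj.2
        rwa [show (∑ i, lam i) = ∑ i, L i from by
          rw [hτ]; exact Equiv.sum_comp τ L] at h0
    clear hmaj hτ
    have hPSle : ∀ m, m < n + 1 → PS a m ≤ PS L m := fun m hm => by
      rw [← partSum_of_antitone ha, ← partSum_of_antitone hLanti]; exact hmajL.1 m hm
    obtain _ | n := n
    · -- k = 1
      have h1 : a 0 = L 0 := by simpa using hmajL.2
      refine ⟨1, by simp, fun i => ?_⟩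
      have : i = 0 := Fin.ext (by omega)
      subst this
      simp [Matrix.diagonal_apply_eq, h1]
    -- k = n + 2
    have ht0 : a 0 ≤ L 0 := by
      have h2 := hPSle 1 (by omega)
      rw [PS_succ, PS_succ, PS_zero, PS_zero, dif_pos (by omega : 0 < n + 2)] at h2
      simpa using h2
    have hlast : L (Fin.last (n + 1)) ≤ a 0 := by
      have h1 : (∑ i, a i) = ∑ i, L i := hmajL.2
      have h2 : ∑ i : Fin (n+2), a i ≤ ∑ _i : Fin (n+2), a 0 :=
        Finset.sum_le_sum fun i _ => ha (Fin.zero_le i)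
      have h3 : ∑ _i : Fin (n+2), L (Fin.last (n+1)) ≤ ∑ i : Fin (n+2), L i :=
        Finset.sum_le_sum fun i _ => hLanti (Fin.le_last i)
      rw [Finset.sum_const, Finset.card_univ, Fintype.card_fin, nsmul_eq_mul] at h2 h3
      have hc : (0:ℝ) < ((n+2 : ℕ) : ℝ) := by positivity
      refine le_of_mul_le_mul_left ?_ hc
      linarith
    -- find the pivot pair
    have hjex : ∃ j : Fin (n+1), a 0 ≤ L j.castSucc ∧ L j.succ ≤ a 0 := by
      by_cases hF : (Finset.univ.filter (fun i : Fin (n+2) => L i < a 0)).Nonempty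
      · set F := Finset.univ.filter (fun i : Fin (n+2) => L i < a 0) with hFdef
        set j0 := F.min' hF with hj0
        have hj0mem : j0 ∈ F := F.min'_mem hF
        have hj0lt : L j0 < a 0 := (Finset.mem_filter.mp hj0mem).2
        have hj0ne : j0 ≠ 0 := by
          intro h; rw [h] at hj0lt; linarith
        have hj0pos : 0 < j0.val := Fin.pos_of_ne_zero hj0ne
        refine ⟨j0.pred hj0ne, ?_, ?_⟩
        · by_contra hlt
          push_neg at hlt
          have hmem : (j0.pred hj0ne).castSucc ∈ F := by
            rw [hFdef]; simp only [Finset.mem_filter, Finset.mem_univ, true_and]; exact hlt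
          have hle := F.min'_le _ hmem
          rw [← hj0, Fin.le_def] at hle
          have hv : ((j0.pred hj0ne).castSucc).val = j0.val - 1 := rfl
          omega
        · rw [Fin.succ_pred]; exact hj0lt.le
      · have hall : ∀ i, a 0 ≤ L i := by
          intro i
          by_contra hcon
          push_neg at hcon
          exact hF ⟨i, by simp [hcon]⟩
        exact ⟨Fin.last n, hall _, by rw [Fin.succ_last]; exact hlast⟩
    obtain ⟨j, hjc, hjs⟩ := hjex
    have hne : j.castSucc ≠ j.succ := (Fin.castSucc_lt_succ : j.castSucc < j.succ).ne
    obtain ⟨c, s, hcs, hct⟩ := exists_cs hjs hjc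
    have hsaj : j.castSucc.succAbove j = j.succ :=
      Fin.succAbove_of_le_castSucc _ _ (le_refl _)
    have hsane : ∀ x : Fin (n+1), j.castSucc.succAbove x ≠ j.castSucc :=
      fun x => Fin.succAbove_ne _ x
    have hsajs : ∀ x : Fin (n+1), x ≠ j → j.castSucc.succAbove x ≠ j.succ := by
      intro x hx hcon
      exact hx (Fin.succAbove_right_injective (p := j.castSucc) (by rw [hcon, hsaj]))
    set lam' : Fin (n+1) → ℝ := reduceLam L j (a 0) with hlam'def
    set a' : Fin (n+1) → ℝ := fun x => a x.succ with ha'def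
    have ha'anti : Antitone a' := fun x y hxy => ha (Fin.succ_le_succ_iff.mpr hxy)
    -- entries of the rotation
    have gux : ∀ x : Fin (n+1),
        rotMat j.castSucc j.succ c s j.castSucc (j.castSucc.succAbove x)
          = if x = j then -s else 0 := by
      intro x
      rw [rotMat_apply_u, if_neg (hsane x)]
      by_cases hx : x = j
      · subst hx; rw [if_pos hsaj, if_pos rfl]
      · rw [if_neg (hsajs x hx), if_neg hx]
    have gvx : ∀ x : Fin (n+1),
        rotMat j.castSucc j.succ c s j.succ (j.castSucc.succAbove x)
          = if x = j then c else 0 := by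
      intro x
      rw [rotMat_apply_v hne, if_neg (hsane x)]
      by_cases hx : x = j
      · subst hx; rw [if_pos hsaj, if_pos rfl]
      · rw [if_neg (hsajs x hx), if_neg hx]
    have hMuu : ((rotMat j.castSucc j.succ c s)ᵀ * Matrix.diagonal L
        * rotMat j.castSucc j.succ c s) j.castSucc j.castSucc = a 0 := by
      rw [rot_conj_apply hne, rotMat_apply_u, rotMat_apply_v hne]
      rw [if_pos rfl, if_pos rfl, if_neg (fun h => h.2.1 rfl)]
      linear_combination hct
    have hMdiag : ∀ x y : Fin (n+1),
        ((rotMat j.castSucc j.succ c s)ᵀ * Matrix.diagonal L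
          * rotMat j.castSucc j.succ c s) (j.castSucc.succAbove x) (j.castSucc.succAbove y)
        = Matrix.diagonal lam' x y := by
      intro x y
      have h3 : ∀ w z : Fin (n+1), (j.castSucc.succAbove w = j.castSucc.succAbove z ∧
          j.castSucc.succAbove w ≠ j.castSucc ∧ j.castSucc.succAbove w ≠ j.succ) ↔
          (w = z ∧ w ≠ j) := by
        intro w z
        constructor
        · rintro ⟨h1, -, h2⟩
          exact ⟨Fin.succAbove_right_injective (p := j.castSucc) h1,
            fun hc => h2 (by rw [hc, hsaj])⟩
        · rintro ⟨h1, h2⟩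
          subst h1
          exact ⟨rfl, hsane w, hsajs w h2⟩
      rw [rot_conj_apply hne, gux, gux, gvx, gvx, if_congr (h3 x y) rfl rfl]
      by_cases hx : x = j <;> by_cases hy : y = j
      · rw [hx, hy, Matrix.diagonal_apply_eq, hlam'def, reduceLam_j,
          if_neg (fun h : j = j ∧ j ≠ j => h.2 rfl)]
        simp only [eq_self_iff_true, if_true]
        linear_combination (L j.castSucc) * hcs + (L j.succ) * hcs - hct
      · rw [Matrix.diagonal_apply_ne _ (fun hc => hy (hc.symm.trans hx)),
          if_neg (fun h : x = y ∧ x ≠ j => hy (h.1.symm.trans hx)),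
          if_neg hy, if_neg hy, if_pos hx, if_pos hx]
        ring
      · rw [Matrix.diagonal_apply_ne _ (fun hc => hx (hc.trans hy)),
          if_neg (fun h : x = y ∧ x ≠ j => hx (h.1.trans hy)),
          if_neg hx, if_neg hx, if_pos hy, if_pos hy]
        ring
      · rw [if_neg hx, if_neg hx, if_neg hy, if_neg hy]
        by_cases hxy : x = y
        · subst hxy
          rw [Matrix.diagonal_apply_eq, if_pos ⟨rfl, hx⟩, hlam'def, reduceLam_ne _ _ hx]
          ring
        · rw [Matrix.diagonal_apply_ne _ hxy, if_neg (fun h : x = y ∧ x ≠ j => hxy h.1)]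
          ring
    -- the key partial-sum identity for lam'
    have key : ∀ m', j.val < m' → m' ≤ n + 1 → PS lam' m' = PS L (m' + 1) - a 0 := by
      intro m'
      induction m' with
      | zero => intro h; exact absurd h (Nat.not_lt_zero _)
      | succ m' ihm =>
        intro h1 h2
        rcases Nat.lt_or_ge j.val m' with hj' | hj'
        · rw [PS_succ, PS_succ L (m' + 1), ihm hj' (by omega),
            dif_pos (by omega : m' < n + 1), dif_pos (by omega : m' + 1 < n + 2)]
          have hne' : (⟨m', by omega⟩ : Fin (n+1)) ≠ j := Fin.ne_of_val_ne (by simp; omega)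
          have hsa : j.castSucc.succAbove ⟨m', by omega⟩ = ⟨m' + 1, by omega⟩ := by
            rw [Fin.succAbove_of_le_castSucc _ _ (by rw [Fin.le_def]; simp; omega)]
            rfl
          rw [hlam'def, reduceLam_ne _ _ hne', hsa]
          ring
        · have hjm : j.val = m' := by omega
          have hPSl : PS lam' m' = PS L m' := by
            refine PS_agree lam' L (by omega) (by omega) fun i => ?_
            have hij : (Fin.castLE (by omega : m' ≤ n + 1) i) ≠ j :=
              Fin.ne_of_val_ne (by simp; omega)
            have hsa : j.castSucc.succAbove (Fin.castLE (by omega : m' ≤ n + 1) i)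
                = Fin.castLE (by omega : m' ≤ n + 2) i := by
              rw [Fin.succAbove_of_castSucc_lt _ _ (by rw [Fin.lt_def]; simp; omega)]
              apply Fin.ext
              simp
            rw [hlam'def, reduceLam_ne _ _ hij, hsa]
          rw [PS_succ, PS_succ L (m' + 1), PS_succ L m', hPSl,
            dif_pos (by omega : m' < n + 1), dif_pos (by omega : m' + 1 < n + 2),
            dif_pos (by omega : m' < n + 2)]
          have e1 : (⟨m', by omega⟩ : Fin (n+1)) = j := Fin.ext (by simp [hjm])
          have e2 : (⟨m', by omega⟩ : Fin (n+2)) = j.castSucc := Fin.ext (by simp [hjm])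
          have e3 : (⟨m' + 1, by omega⟩ : Fin (n+2)) = j.succ := Fin.ext (by simp [hjm])
          rw [e1, e2, e3, hlam'def, reduceLam_j]
          ring
    -- majorization of the reduced problem
    have hmaj' : Majorized a' lam' := by
      constructor
      · intro m hm
        rw [partSum_of_antitone ha'anti]
        refine le_trans ?_ (PS_le_partSum lam' m)
        by_cases hmj : m ≤ j.val
        · unfold PS
          refine Finset.sum_le_sum fun i _ => ?_
          by_cases him : (i : ℕ) < m
          · rw [if_pos him, if_pos him]
            have hij : i ≠ j := Fin.ne_of_val_ne (by omega)
            have hsa : j.castSucc.succAbove i = i.castSucc :=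
              Fin.succAbove_of_castSucc_lt _ _ (by rw [Fin.lt_def]; simp; omega)
            rw [ha'def, hlam'def, reduceLam_ne _ _ hij, hsa]
            calc a i.succ ≤ a 0 := ha (Fin.zero_le _)
            _ ≤ L j.castSucc := hjc
            _ ≤ L i.castSucc := hLanti (by rw [Fin.le_def]; simp; omega)
          · rw [if_neg him, if_neg him]
        · push_neg at hmj
          have h1 : PS a' m = PS a (m + 1) - a 0 := by rw [ha'def]; exact PS_tail a m
          rw [h1, key m hmj (by omega)]
          exact sub_le_sub_right (hPSle (m + 1) (by omega)) _
      · have h1 : ∑ i, a' i = PS a' (n + 1) := (PS_of_le a' (le_refl _)).symm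
        have h2 : ∑ i, lam' i = PS lam' (n + 1) := (PS_of_le lam' (le_refl _)).symm
        have h3 : PS a' (n + 1) = PS a (n + 2) - a 0 := by rw [ha'def]; exact PS_tail a (n + 1)
        rw [h1, h2, h3, key (n + 1) (by omega) (le_refl _),
          PS_of_le a (by omega), PS_of_le L (by omega), hmajL.2]
    obtain ⟨K', hK'o, hK'd⟩ := ih a' lam' ha'anti hmaj'
    -- assembling the matrix
    set e2 : Fin (n+2) ≃ (Fin (n+1) ⊕ Unit) :=
      (finSuccEquiv' j.castSucc).trans (Equiv.optionEquivSumPUnit _) with he2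
    have he2at : e2 j.castSucc = Sum.inr Unit.unit := by
      simp [he2, finSuccEquiv'_at]
    have he2sa : ∀ x, e2 (j.castSucc.succAbove x) = Sum.inl x := fun x => by
      simp [he2, finSuccEquiv'_succAbove]
    set Ehat : Matrix (Fin (n+1) ⊕ Unit) (Fin (n+1) ⊕ Unit) ℝ :=
      Matrix.fromBlocks K' 0 0 1 with hEhatdef
    set E : Matrix (Fin (n+2)) (Fin (n+2)) ℝ := Ehat.submatrix e2 e2 with hEdef
    have hEhatorth : Ehatᵀ * Ehat = 1 := by
      rw [hEhatdef, Matrix.fromBlocks_transpose, Matrix.fromBlocks_multiply]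
      simp [hK'o, Matrix.fromBlocks_one]
    have hEorth : Eᵀ * E = 1 := by
      rw [hEdef, Matrix.transpose_submatrix, Matrix.submatrix_mul_equiv, hEhatorth,
        Matrix.submatrix_one_equiv]
    set Mhat : Matrix (Fin (n+1) ⊕ Unit) (Fin (n+1) ⊕ Unit) ℝ :=
      Matrix.fromBlocks (Matrix.diagonal lam')
        (Matrix.of fun x (_ : Unit) => ((rotMat j.castSucc j.succ c s)ᵀ * Matrix.diagonal L
          * rotMat j.castSucc j.succ c s) (j.castSucc.succAbove x) j.castSucc)
        (Matrix.of fun (_ : Unit) y => ((rotMat j.castSucc j.succ c s)ᵀ * Matrix.diagonal L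
          * rotMat j.castSucc j.succ c s) j.castSucc (j.castSucc.succAbove y))
        (Matrix.of fun _ _ => a 0) with hMhatdef
    have hMeq : (rotMat j.castSucc j.succ c s)ᵀ * Matrix.diagonal L
        * rotMat j.castSucc j.succ c s = Mhat.submatrix e2 e2 := by
      ext x y
      rw [Matrix.submatrix_apply]
      refine Fin.succAboveCases j.castSucc ?_ (fun x' => ?_) x
      · refine Fin.succAboveCases j.castSucc ?_ (fun y' => ?_) y
        · rw [he2at, hMuu, hMhatdef]; rfl
        · rw [he2at, he2sa, hMhatdef]; rfl
      · refine Fin.succAboveCases j.castSucc ?_ (fun y' => ?_) y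
        · rw [he2at, he2sa, hMhatdef]; rfl
        · rw [he2sa, he2sa, hMhatdef, hMdiag x' y']; rfl
    have hdiag_inl : ∀ x : Fin (n+1),
        (Ehatᵀ * Mhat * Ehat) (Sum.inl x) (Sum.inl x) = a x.succ := by
      intro x
      rw [hEhatdef, hMhatdef, Matrix.fromBlocks_transpose, Matrix.fromBlocks_multiply,
        Matrix.fromBlocks_multiply]
      simp only [Matrix.zero_mul, Matrix.mul_zero, add_zero, zero_add, Matrix.mul_one,
        Matrix.one_mul, Matrix.fromBlocks_apply₁₁]
      have := hK'd x
      rw [ha'def] at this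
      simpa using this
    have hdiag_inr :
        (Ehatᵀ * Mhat * Ehat) (Sum.inr Unit.unit) (Sum.inr Unit.unit) = a 0 := by
      rw [hEhatdef, hMhatdef, Matrix.fromBlocks_transpose, Matrix.fromBlocks_multiply,
        Matrix.fromBlocks_multiply]
      simp only [Matrix.transpose_zero, Matrix.transpose_one, Matrix.zero_mul,
        Matrix.mul_zero, add_zero, zero_add, Matrix.mul_one, Matrix.one_mul,
        Matrix.fromBlocks_apply₂₂]
      rfl
    set ρ : Equiv.Perm (Fin (n+2)) :=
      e2.trans ((finSuccEquiv' (0 : Fin (n+2))).trans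
        (Equiv.optionEquivSumPUnit (Fin (n+1)))).symm with hρdef
    have hρat : ρ j.castSucc = 0 := by
      simp [hρdef, he2at, finSuccEquiv'_symm_none]
    have hρsa : ∀ x, ρ (j.castSucc.succAbove x) = x.succ := fun x => by
      simp [hρdef, he2sa, finSuccEquiv'_symm_some]
    have hfin : ∀ i, (Eᵀ * ((rotMat j.castSucc j.succ c s)ᵀ * Matrix.diagonal L
        * rotMat j.castSucc j.succ c s) * E) i i = a (ρ i) := by
      intro i
      rw [hMeq, hEdef, Matrix.transpose_submatrix, Matrix.submatrix_mul_equiv,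
        Matrix.submatrix_mul_equiv, Matrix.submatrix_apply]
      refine Fin.succAboveCases j.castSucc ?_ (fun x => ?_) i
      · rw [he2at, hρat, hdiag_inr]
      · rw [he2sa, hρsa, hdiag_inl]
    refine ⟨rotMat j.castSucc j.succ c s * E * permMat ρ.symm, ?_, ?_⟩
    · exact orth_mul (orth_mul (rotMat_orth hne hcs) hEorth) (permMat_orth ρ.symm)
    · intro i
      have hgrp : (rotMat j.castSucc j.succ c s * E * permMat ρ.symm)ᵀ * Matrix.diagonal L
          * (rotMat j.castSucc j.succ c s * E * permMat ρ.symm)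
          = (permMat ρ.symm)ᵀ * (Eᵀ * ((rotMat j.castSucc j.succ c s)ᵀ * Matrix.diagonal L
            * rotMat j.castSucc j.succ c s) * E) * permMat ρ.symm := by
        simp only [Matrix.transpose_mul, Matrix.mul_assoc]
      rw [hgrp, permMat_conj, hfin, Equiv.apply_symm_apply]

lemma sign_conj_diag {k : ℕ} (N : Matrix (Fin k) (Fin k) ℝ) (d : Fin k → ℝ)
    (hd : ∀ i, d i * d i = 1) (i : Fin k) :
    (Matrix.diagonal d * N * Matrix.diagonal d) i i = N i i := by
  rw [Matrix.mul_diagonal, Matrix.diagonal_mul]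
  linear_combination N i i * hd i

/-- **Horn's theorem.** If `a ≺ λ` then there is `K ∈ SO(n)` such that the
diagonal of `Kᵀ D_λ K` is `a`. -/
theorem horn_exists_so {n : ℕ} (a lam : Fin n → ℝ) (h : Majorized a lam) :
    ∃ K : Matrix (Fin n) (Fin n) ℝ, Kᵀ * K = 1 ∧ K.det = 1 ∧
      ∀ i, (Kᵀ * Matrix.diagonal lam * K) i i = a i := by
  obtain ⟨σ, hσ⟩ := exists_perm_descSort a
  set A := descSort a with hAdef
  have hAanti : Antitone A := descSort_antitone a
  have hmajA : Majorized A lam := by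
    constructor
    · intro m hm
      have h0 := h.1 m hm
      rwa [show partSum a m = partSum A m from by rw [hσ, partSum_comp_perm]] at h0
    · have h0 := h.2
      rwa [show (∑ i, a i) = ∑ i, A i from by rw [hσ]; exact Equiv.sum_comp σ A] at h0
  obtain ⟨K0, hK0o, hK0d⟩ := horn_aux n A lam hAanti hmajA
  -- permute the diagonal into the right order
  have hK1 : ∃ K : Matrix (Fin n) (Fin n) ℝ, Kᵀ * K = 1 ∧
      ∀ i, (Kᵀ * Matrix.diagonal lam * K) i i = a i := by
    refine ⟨K0 * permMat σ, orth_mul hK0o (permMat_orth σ), fun i => ?_⟩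
    have hgrp : (K0 * permMat σ)ᵀ * Matrix.diagonal lam * (K0 * permMat σ)
        = (permMat σ)ᵀ * (K0ᵀ * Matrix.diagonal lam * K0) * permMat σ := by
      simp only [Matrix.transpose_mul, Matrix.mul_assoc]
    rw [hgrp, permMat_conj, hK0d]
    exact (congrFun hσ i).symm
  obtain ⟨K1, hK1o, hK1d⟩ := hK1
  -- fix the determinant
  have hdet2 : K1.det * K1.det = 1 := by
    have := congrArg Matrix.det hK1o
    rwa [Matrix.det_mul, Matrix.det_transpose, Matrix.det_one] at this
  rcases mul_self_eq_one_iff.mp hdet2 with hd1 | hdm1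
  · exact ⟨K1, hK1o, hd1, hK1d⟩
  · cases n with
    | zero => exact ⟨K1, hK1o, by simp [Matrix.det_isEmpty], hK1d⟩
    | succ m =>
      set S : Matrix (Fin (m+1)) (Fin (m+1)) ℝ :=
        Matrix.diagonal (fun i => if i = 0 then (-1 : ℝ) else 1) with hSdef
      have hSt : Sᵀ = S := by rw [hSdef, Matrix.diagonal_transpose]
      have hSS : S * S = 1 := by
        rw [hSdef, Matrix.diagonal_mul_diagonal]
        ext x y
        by_cases hxy : x = y
        · subst hxy
          by_cases hx : x = 0 <;>
            simp [Matrix.diagonal_apply_eq, Matrix.one_apply, hx]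
        · simp [Matrix.diagonal_apply_ne _ hxy, Matrix.one_apply, hxy]
      have hSdet : S.det = -1 := by
        rw [hSdef, Matrix.det_diagonal]
        rw [Finset.prod_eq_single (0 : Fin (m+1)) (fun i _ hi => by simp [hi]) (by simp)]
        simp
      refine ⟨K1 * S, ?_, ?_, ?_⟩
      · exact orth_mul hK1o (by rw [hSt, hSS])
      · rw [Matrix.det_mul, hdm1, hSdet]; norm_num
      · intro i
        have hgrp : (K1 * S)ᵀ * Matrix.diagonal lam * (K1 * S)
            = S * (K1ᵀ * Matrix.diagonal lam * K1) * S := by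
          simp only [Matrix.transpose_mul, Matrix.mul_assoc, hSt]
        rw [hgrp, hSdef,
          sign_conj_diag _ _ (fun x => by by_cases hx : x = 0 <;> simp [hx]) i]
        exact hK1d i
end
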